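/- For nontrivial bounded lattices A and B, the set Con₀₁(A ⊞ B) of congruences of A ⊞ B with singleton classes at 0 and 1 is in lattice isomorphism with Con₀₁(A) × Con₀₁(B), via (α, β) ↦ α ⊞ β. -/

import Mathlib

/-- A filter of a lattice: a nonempty, upward-closed subset closed under binary meets. -/
def IsLatFilter {L : Type*} [Lattice L] (F : Set L) : Prop :=
  F.Nonempty ∧ (∀ x ∈ F, ∀ y : L, x ≤ y → y ∈ F) ∧ (∀ x ∈ F, ∀ y ∈ F, x ⊓ y ∈ F)

/-- An ideal of a lattice: a nonempty, downward-closed subset closed under binary joins. -/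
def IsLatIdeal {L : Type*} [Lattice L] (I : Set L) : Prop :=
  I.Nonempty ∧ (∀ x ∈ I, ∀ y : L, y ≤ x → y ∈ I) ∧ (∀ x ∈ I, ∀ y ∈ I, x ⊔ y ∈ I)

/-- A prime filter: a proper filter such that `x ⊔ y ∈ P` implies `x ∈ P` or `y ∈ P`. -/
def IsPrimeFilter {L : Type*} [Lattice L] (P : Set L) : Prop :=
  IsLatFilter P ∧ P ≠ Set.univ ∧ ∀ x y : L, x ⊔ y ∈ P → x ∈ P ∨ y ∈ P

/-- A prime ideal: a proper ideal such that `x ⊓ y ∈ I` implies `x ∈ I` or `y ∈ I`. -/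
def IsPrimeIdeal {L : Type*} [Lattice L] (I : Set L) : Prop :=
  IsLatIdeal I ∧ I ≠ Set.univ ∧ ∀ x y : L, x ⊓ y ∈ I → x ∈ I ∨ y ∈ I

/-- A lattice congruence: an equivalence relation compatible with `⊔` and `⊓`. -/
def IsLatCong {L : Type*} [Lattice L] (θ : L → L → Prop) : Prop :=
  Equivalence θ ∧ ∀ a b c d : L, θ a b → θ c d → θ (a ⊔ c) (b ⊔ d) ∧ θ (a ⊓ c) (b ⊓ d)

/-- `C` is the horizontal sum of its subsets `A` and `B`: both are bounded sublattices,
they cover `C`, they intersect exactly in `{⊥, ⊤}`, and elements of `A \ {⊥, ⊤}` are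
incomparable with elements of `B \ {⊥, ⊤}`. -/
structure IsHorizSum {C : Type*} [Lattice C] [BoundedOrder C] (A B : Set C) : Prop where
  botA : ⊥ ∈ A
  topA : ⊤ ∈ A
  botB : ⊥ ∈ B
  topB : ⊤ ∈ B
  subA : ∀ x ∈ A, ∀ y ∈ A, x ⊓ y ∈ A ∧ x ⊔ y ∈ A
  subB : ∀ x ∈ B, ∀ y ∈ B, x ⊓ y ∈ B ∧ x ⊔ y ∈ B
  union : A ∪ B = Set.univ
  inter : A ∩ B = {⊥, ⊤}
  incomp : ∀ a ∈ A, a ≠ ⊥ → a ≠ ⊤ → ∀ b ∈ B, b ≠ ⊥ → b ≠ ⊤ → ¬ a ≤ b ∧ ¬ b ≤ a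

/-- A congruence of the sublattice `A` of `C` (represented as a relation on `C` supported
on `A`) whose classes of `⊥` and `⊤` are singletons. -/
def IsCon01On {C : Type*} [Lattice C] [BoundedOrder C] (A : Set C)
    (θ : C → C → Prop) : Prop :=
  (∀ x y : C, θ x y → x ∈ A ∧ y ∈ A) ∧
  (∀ x ∈ A, θ x x) ∧ (∀ x y : C, θ x y → θ y x) ∧
  (∀ x y z : C, θ x y → θ y z → θ x z) ∧
  (∀ a b c d : C, θ a b → θ c d → θ (a ⊔ c) (b ⊔ d) ∧ θ (a ⊓ c) (b ⊓ d)) ∧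
  (∀ x : C, θ x ⊥ → x = ⊥) ∧ (∀ x : C, θ x ⊤ → x = ⊤)

/-- A congruence of `C` whose classes of `⊥` and `⊤` are singletons. -/
def IsCon01 {C : Type*} [Lattice C] [BoundedOrder C] (θ : C → C → Prop) : Prop :=
  IsLatCong θ ∧ (∀ x : C, θ x ⊥ → x = ⊥) ∧ (∀ x : C, θ x ⊤ → x = ⊤)

section Aux

variable {C : Type*} [Lattice C] [BoundedOrder C] {A B : Set C}

lemma hs_symm (hAB : IsHorizSum A B) : IsHorizSum B A where
  botA := hAB.botB
  topA := hAB.topB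
  botB := hAB.botA
  topB := hAB.topA
  subA := hAB.subB
  subB := hAB.subA
  union := by rw [Set.union_comm]; exact hAB.union
  inter := by rw [Set.inter_comm]; exact hAB.inter
  incomp := fun b hb hb0 hb1 a ha ha0 ha1 =>
    (hAB.incomp a ha ha0 ha1 b hb hb0 hb1).symm

lemma hs_mixed (hAB : IsHorizSum A B) {a b : C} (ha : a ∈ A) (ha0 : a ≠ ⊥) (ha1 : a ≠ ⊤)
    (hb : b ∈ B) (hb0 : b ≠ ⊥) (hb1 : b ≠ ⊤) : a ⊔ b = ⊤ ∧ a ⊓ b = ⊥ := by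
  constructor
  · have hmem : a ⊔ b ∈ A ∪ B := by rw [hAB.union]; exact Set.mem_univ _
    by_contra hne
    have hne0 : a ⊔ b ≠ ⊥ := fun h => ha0 (le_bot_iff.mp (h ▸ le_sup_left))
    cases hmem with
    | inl h => exact (hAB.incomp _ h hne0 hne b hb hb0 hb1).2 le_sup_right
    | inr h => exact (hAB.incomp a ha ha0 ha1 _ h hne0 hne).1 le_sup_left
  · have hmem : a ⊓ b ∈ A ∪ B := by rw [hAB.union]; exact Set.mem_univ _
    by_contra hne
    have hne1 : a ⊓ b ≠ ⊤ := fun h => ha1 (top_le_iff.mp (h ▸ inf_le_left))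
    cases hmem with
    | inl h => exact (hAB.incomp _ h hne hne1 b hb hb0 hb1).1 inf_le_right
    | inr h => exact (hAB.incomp a ha ha0 ha1 _ h hne hne1).2 inf_le_left

lemma collapse (hAB : IsHorizSum A B) (hbt : (⊥ : C) ≠ ⊤) {α β : C → C → Prop}
    (hα : IsCon01On A α) (hβ : IsCon01On B β)
    {x y : C} (hxy : β x y) (hx : x ∈ A) (hy : y ∈ A) : α x y := by
  obtain ⟨βsupp, βrefl, βsymm, βtrans, βcomp, βbot, βtop⟩ := hβ
  have hx2 : x ∈ ({⊥, ⊤} : Set C) := by rw [← hAB.inter]; exact ⟨hx, (βsupp x y hxy).1⟩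
  have hy2 : y ∈ ({⊥, ⊤} : Set C) := by rw [← hAB.inter]; exact ⟨hy, (βsupp x y hxy).2⟩
  rcases hx2 with hx2 | hx2 <;> rcases hy2 with hy2 | hy2 <;>
      subst hx2 <;> subst hy2
  · exact hα.2.1 ⊥ hAB.botA
  · exact absurd (βtop ⊥ hxy) hbt
  · exact absurd (βbot ⊤ hxy) (Ne.symm hbt)
  · exact hα.2.1 ⊤ hAB.topA

lemma restr_con01on (_hbA : (⊥:C) ∈ A) (_htA : (⊤:C) ∈ A)
    (hsub : ∀ x ∈ A, ∀ y ∈ A, x ⊓ y ∈ A ∧ x ⊔ y ∈ A) {θ : C → C → Prop}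
    (hθ : IsCon01 θ) : IsCon01On A (fun x y => θ x y ∧ x ∈ A ∧ y ∈ A) := by
  obtain ⟨⟨heq, hcomp⟩, hb, ht⟩ := hθ
  refine ⟨fun x y h => h.2, fun x hx => ⟨heq.refl x, hx, hx⟩,
    fun x y h => ⟨heq.symm h.1, h.2.2, h.2.1⟩,
    fun x y z h h' => ⟨heq.trans h.1 h'.1, h.2.1, h'.2.2⟩,
    fun a b c d h h' => ?_, fun x h => hb x h.1, fun x h => ht x h.1⟩
  obtain ⟨h1, h2⟩ := hcomp a b c d h.1 h'.1
  exact ⟨⟨h1, (hsub a h.2.1 c h'.2.1).2, (hsub b h.2.2 d h'.2.2).2⟩,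
    ⟨h2, (hsub a h.2.1 c h'.2.1).1, (hsub b h.2.2 d h'.2.2).1⟩⟩

lemma con01_split (hAB : IsHorizSum A B) {θ : C → C → Prop} (hθ : IsCon01 θ)
    {x y : C} (hxy : θ x y) : (x ∈ A ∧ y ∈ A) ∨ (x ∈ B ∧ y ∈ B) := by
  obtain ⟨⟨heq, hcomp⟩, hb, ht⟩ := hθ
  by_cases hx0 : x = ⊥
  · subst hx0
    have : y = ⊥ := hb y (heq.symm hxy)
    subst this
    exact Or.inl ⟨hAB.botA, hAB.botA⟩
  by_cases hx1 : x = ⊤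
  · subst hx1
    have : y = ⊤ := ht y (heq.symm hxy)
    subst this
    exact Or.inl ⟨hAB.topA, hAB.topA⟩
  by_cases hy0 : y = ⊥
  · subst hy0; exact absurd (hb x hxy) hx0
  by_cases hy1 : y = ⊤
  · subst hy1; exact absurd (ht x hxy) hx1
  have hxm : x ∈ A ∪ B := by rw [hAB.union]; exact Set.mem_univ _
  have hym : y ∈ A ∪ B := by rw [hAB.union]; exact Set.mem_univ _
  -- mixed case is impossible
  have key : ∀ u v : C, θ u v → u ≠ ⊥ → u ≠ ⊤ → v ≠ ⊥ → v ≠ ⊤ →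
      u ∈ A → v ∈ B → False := by
    intro u v huv hu0 hu1 hv0 hv1 hu hv
    have := (hs_mixed hAB hu hu0 hu1 hv hv0 hv1).1
    have h2 : θ (u ⊔ v) (v ⊔ v) := (hcomp u v v v huv (heq.refl v)).1
    rw [this, sup_idem] at h2
    exact hv1 (ht v (heq.symm h2))
  cases hxm with
  | inl hx =>
    cases hym with
    | inl hy => exact Or.inl ⟨hx, hy⟩
    | inr hy => exact absurd (key x y hxy hx0 hx1 hy0 hy1 hx hy) not_false
  | inr hx =>
    cases hym with
    | inl hy => exact absurd (key y x (heq.symm hxy) hy0 hy1 hx0 hx1 hy hx) not_false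
    | inr hy => exact Or.inr ⟨hx, hy⟩


lemma mixed_compat (hAB : IsHorizSum A B) {α β : C → C → Prop}
    (hα : IsCon01On A α) (hβ : IsCon01On B β) {a b c d : C}
    (hab : α a b) (hcd : β c d) :
    (α (a ⊔ c) (b ⊔ d) ∨ β (a ⊔ c) (b ⊔ d)) ∧ (α (a ⊓ c) (b ⊓ d) ∨ β (a ⊓ c) (b ⊓ d)) := by
  obtain ⟨αsupp, αrefl, αsymm, αtrans, αcomp, αbot, αtop⟩ := hα
  obtain ⟨βsupp, βrefl, βsymm, βtrans, βcomp, βbot, βtop⟩ := hβ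
  have haA : a ∈ A := (αsupp a b hab).1
  have hbA : b ∈ A := (αsupp a b hab).2
  have hcB : c ∈ B := (βsupp c d hcd).1
  have hdB : d ∈ B := (βsupp c d hcd).2
  by_cases ha0 : a = ⊥
  · subst ha0
    have hb0 : b = ⊥ := αbot b (αsymm _ _ hab)
    subst hb0
    simp only [bot_sup_eq, bot_inf_eq]
    exact ⟨Or.inr hcd, Or.inr (βrefl ⊥ hAB.botB)⟩
  by_cases ha1 : a = ⊤
  · subst ha1
    have hb1 : b = ⊤ := αtop b (αsymm _ _ hab)
    subst hb1
    simp only [top_sup_eq, top_inf_eq]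
    exact ⟨Or.inl (αrefl ⊤ hAB.topA), Or.inr hcd⟩
  have hb0 : b ≠ ⊥ := fun h => ha0 (αbot a (h ▸ hab))
  have hb1 : b ≠ ⊤ := fun h => ha1 (αtop a (h ▸ hab))
  by_cases hc0 : c = ⊥
  · subst hc0
    have hd0 : d = ⊥ := βbot d (βsymm _ _ hcd)
    subst hd0
    simp only [sup_bot_eq, inf_bot_eq]
    exact ⟨Or.inl hab, Or.inl (αrefl ⊥ hAB.botA)⟩
  by_cases hc1 : c = ⊤
  · subst hc1
    have hd1 : d = ⊤ := βtop d (βsymm _ _ hcd)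
    subst hd1
    simp only [sup_top_eq, inf_top_eq]
    exact ⟨Or.inl (αrefl ⊤ hAB.topA), Or.inl hab⟩
  have hd0 : d ≠ ⊥ := fun h => hc0 (βbot c (h ▸ hcd))
  have hd1 : d ≠ ⊤ := fun h => hc1 (βtop c (h ▸ hcd))
  obtain ⟨hs1, hi1⟩ := hs_mixed hAB haA ha0 ha1 hcB hc0 hc1
  obtain ⟨hs2, hi2⟩ := hs_mixed hAB hbA hb0 hb1 hdB hd0 hd1
  rw [hs1, hs2, hi1, hi2]
  exact ⟨Or.inl (αrefl ⊤ hAB.topA), Or.inl (αrefl ⊥ hAB.botA)⟩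

lemma join_isCon01 (hAB : IsHorizSum A B) {α β : C → C → Prop}
    (hα : IsCon01On A α) (hβ : IsCon01On B β) :
    IsCon01 (fun x y => α x y ∨ β x y) := by
  have hα' := hα
  have hβ' := hβ
  obtain ⟨αsupp, αrefl, αsymm, αtrans, αcomp, αbot, αtop⟩ := hα'
  obtain ⟨βsupp, βrefl, βsymm, βtrans, βcomp, βbot, βtop⟩ := hβ'
  -- junction at the glued points
  have bridge : ∀ {x y : C}, α x y → β y y → True := fun _ _ => trivial
  refine ⟨⟨⟨?_, ?_, ?_⟩, ?_⟩, ?_, ?_⟩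
  · -- refl
    intro x
    have : x ∈ A ∪ B := by rw [hAB.union]; exact Set.mem_univ _
    cases this with
    | inl h => exact Or.inl (αrefl x h)
    | inr h => exact Or.inr (βrefl x h)
  · -- symm
    rintro x y (h | h)
    · exact Or.inl (αsymm _ _ h)
    · exact Or.inr (βsymm _ _ h)
  · -- trans
    rintro x y z (h | h) (h' | h')
    · exact Or.inl (αtrans _ _ _ h h')
    · -- α x y, β y z : y ∈ A ∩ B = {⊥, ⊤}
      have hy2 : y ∈ ({⊥, ⊤} : Set C) := by
        rw [← hAB.inter]; exact ⟨(αsupp x y h).2, (βsupp y z h').1⟩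
      rcases hy2 with hy2 | hy2 <;> subst hy2
      · have hx : x = ⊥ := αbot x h
        subst hx; exact Or.inr h'
      · have hx : x = ⊤ := αtop x h
        subst hx; exact Or.inr h'
    · -- β x y, α y z
      have hy2 : y ∈ ({⊥, ⊤} : Set C) := by
        rw [← hAB.inter]; exact ⟨(αsupp y z h').1, (βsupp x y h).2⟩
      rcases hy2 with hy2 | hy2 <;> subst hy2
      · have hz : z = ⊥ := αbot z (αsymm _ _ h')
        subst hz; exact Or.inr h
      · have hz : z = ⊤ := αtop z (αsymm _ _ h')
        subst hz; exact Or.inr h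
    · exact Or.inr (βtrans _ _ _ h h')
  · -- compat
    rintro a b c d (h | h) (h' | h')
    · obtain ⟨h1, h2⟩ := αcomp a b c d h h'
      exact ⟨Or.inl h1, Or.inl h2⟩
    · exact mixed_compat hAB hα hβ h h'
    · obtain ⟨h1, h2⟩ := mixed_compat (hs_symm hAB) hβ hα h h'
      exact ⟨h1.symm, h2.symm⟩
    · obtain ⟨h1, h2⟩ := βcomp a b c d h h'
      exact ⟨Or.inr h1, Or.inr h2⟩
  · rintro x (h | h)
    · exact αbot x h
    · exact βbot x h
  · rintro x (h | h)
    · exact αtop x h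
    · exact βtop x h

end Aux

/-- `Con₀₁(A ⊞ B)` is in lattice isomorphism with `Con₀₁(A) × Con₀₁(B)` via
`(α, β) ↦ α ⊞ β` (whose classes are those of `α`, those of `β`, and the glued singleton
classes of `⊥` and `⊤`). -/
theorem con01_horizSum_orderIso {C : Type*} [Lattice C] [BoundedOrder C] (A B : Set C)
    (hAB : IsHorizSum A B) (hbt : (⊥ : C) ≠ ⊤) :
    ∃ e : {p : (C → C → Prop) × (C → C → Prop) //
            IsCon01On A p.1 ∧ IsCon01On B p.2} ≃o {θ : C → C → Prop // IsCon01 θ},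
      ∀ p, (e p : C → C → Prop) = fun x y => p.1.1 x y ∨ p.1.2 x y := by
  have hBA := hs_symm hAB
  refine ⟨⟨⟨fun p => ⟨fun x y => p.1.1 x y ∨ p.1.2 x y, join_isCon01 hAB p.2.1 p.2.2⟩,
      fun θ => ⟨(fun x y => θ.1 x y ∧ x ∈ A ∧ y ∈ A, fun x y => θ.1 x y ∧ x ∈ B ∧ y ∈ B),
        restr_con01on hAB.botA hAB.topA hAB.subA θ.2,
        restr_con01on hAB.botB hAB.topB hAB.subB θ.2⟩, ?_, ?_⟩, ?_⟩, fun p => rfl⟩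
  · -- left_inv
    rintro ⟨⟨α, β⟩, hα, hβ⟩
    apply Subtype.ext
    simp only [Prod.mk.injEq]
    constructor
    · funext x y
      apply propext
      constructor
      · rintro ⟨(h | h), hx, hy⟩
        · exact h
        · exact collapse hAB hbt hα hβ h hx hy
      · intro h
        exact ⟨Or.inl h, (hα.1 x y h).1, (hα.1 x y h).2⟩
    · funext x y
      apply propext
      constructor
      · rintro ⟨(h | h), hx, hy⟩
        · exact collapse hBA hbt hβ hα h hx hy
        · exact h
      · intro h
        exact ⟨Or.inr h, (hβ.1 x y h).1, (hβ.1 x y h).2⟩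
  · -- right_inv
    rintro ⟨θ, hθ⟩
    apply Subtype.ext
    funext x y
    apply propext
    constructor
    · rintro (⟨h, _⟩ | ⟨h, _⟩) <;> exact h
    · intro h
      rcases con01_split hAB hθ h with ⟨hx, hy⟩ | ⟨hx, hy⟩
      · exact Or.inl ⟨h, hx, hy⟩
      · exact Or.inr ⟨h, hx, hy⟩
  · -- map_rel_iff'
    rintro ⟨⟨α1, β1⟩, hα1, hβ1⟩ ⟨⟨α2, β2⟩, hα2, hβ2⟩
    simp only [Equiv.coe_fn_mk, Subtype.mk_le_mk, Prod.mk_le_mk, Pi.le_def, le_Prop_eq]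
    constructor
    · intro h
      constructor
      · intro x y hxy
        rcases h x y (Or.inl hxy) with h' | h'
        · exact h'
        · exact collapse hAB hbt hα2 hβ2 h' (hα1.1 x y hxy).1 (hα1.1 x y hxy).2
      · intro x y hxy
        rcases h x y (Or.inr hxy) with h' | h'
        · exact collapse hBA hbt hβ2 hα2 h' (hβ1.1 x y hxy).1 (hβ1.1 x y hxy).2
        · exact h'
    · rintro ⟨h1, h2⟩ x y (h | h)
      · exact Or.inl (h1 x y h)
      · exact Or.inr (h2 x y h)
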